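/- Fix n ≥ 1, select kernels σ_0, σ_1, ..., σ_{n−1}, and extend them to a strategy σ by setting σ_j(u, x) = σ_{n−1}(x) for all j > n−1, u ∈ S^{j−n+1} and x ∈ S^{n−1} (i.e. the predictive at any later time depends only on the last n−1 observations, through σ_{n−1}). If, under P_σ, (X_2, ..., X_n) has the same distribution as (X_1, ..., X_{n−1}), then the coordinate process X is stationary under P_σ. -/

import Mathlib

open MeasureTheory ProbabilityTheory

namespace PredictiveBayes

variable {S : Type*} [MeasurableSpace S]

/-- The finite-dimensional distributions determined by a strategy `κ`. -/
noncomputable def stratFDD (κ : ∀ n, Kernel (Fin n → S) S) : ∀ n, Measure (Fin n → S)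
  | 0 => Measure.dirac (fun i : Fin 0 => i.elim0)
  | n + 1 => (stratFDD κ n).bind (fun x => ((κ n) x).map (Fin.snoc x))

/-- `P` is the Ionescu–Tulcea law `P_κ` of the strategy `κ`. -/
def IsStrategyLaw (κ : ∀ n, Kernel (Fin n → S) S) (P : Measure (ℕ → S)) : Prop :=
  ∀ n, P.map (fun ω (i : Fin n) => ω i) = stratFDD κ n

/-- The process `Y` is stationary under `P`. -/
def Stationary {Ω : Type*} [MeasurableSpace Ω] (P : Measure Ω) (Y : ℕ → Ω → S) : Prop :=
  ∀ n : ℕ, P.map (fun ω (i : Fin n) => Y ((i : ℕ) + 1) ω)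
    = P.map (fun ω (i : Fin n) => Y i ω)

/- Auxiliary lemmas -/

lemma measurable_snoc_pair (k : ℕ) :
    Measurable (fun p : (Fin k → S) × S => Fin.snoc p.1 p.2 : _ → Fin (k+1) → S) := by
  apply measurable_pi_lambda
  intro i
  induction i using Fin.lastCases with
  | last => simpa using measurable_snd
  | cast j => simpa using (by exact (measurable_pi_apply j).comp measurable_fst :
      Measurable fun c : (Fin k → S) × S => c.1 j)

lemma measurable_snoc_left {k : ℕ} (x : Fin k → S) :
    Measurable (fun y : S => (Fin.snoc x y : Fin (k+1) → S)) := by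
  apply measurable_pi_lambda
  intro i
  induction i using Fin.lastCases with
  | last => simpa using measurable_id'
  | cast j => simpa using measurable_const

lemma measurable_snocMap {k : ℕ} (κk : Kernel (Fin k → S) S) [IsMarkovKernel κk] :
    Measurable (fun x => (κk x).map (Fin.snoc x) : (Fin k → S) → Measure (Fin (k+1) → S)) := by
  rw [Measure.measurable_measure]
  intro s hs
  simp_rw [fun x : Fin k → S => Measure.map_apply (measurable_snoc_left x) hs]
  have ht : MeasurableSet ((fun p : (Fin k → S) × S => Fin.snoc p.1 p.2) ⁻¹' s) :=
    (measurable_snoc_pair k) hs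
  exact Kernel.measurable_kernel_prodMk_left ht

lemma measurable_tail (k : ℕ) :
    Measurable (fun x : Fin (k+1) → S => Fin.tail x) :=
  measurable_pi_lambda _ fun i => measurable_pi_apply _

lemma map_bind' {α β γ : Type*} [MeasurableSpace α] [MeasurableSpace β] [MeasurableSpace γ]
    (m : Measure α) {f : α → Measure β} {g : β → γ}
    (hf : Measurable f) (hg : Measurable g) :
    (m.bind f).map g = m.bind (fun x => (f x).map g) := by
  rw [← Measure.bind_dirac_eq_map _ hg,
    Measure.bind_bind (g := fun x => Measure.dirac (g x)) hf.aemeasurable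
      (Measure.measurable_dirac.comp hg).aemeasurable]
  simp_rw [Measure.bind_dirac_eq_map _ hg]

lemma bind_map' {α β γ : Type*} [MeasurableSpace α] [MeasurableSpace β] [MeasurableSpace γ]
    (m : Measure α) {g : α → β} {f : β → Measure γ}
    (hg : Measurable g) (hf : Measurable f) :
    (m.map g).bind f = m.bind (fun x => f (g x)) := by
  rw [← Measure.bind_dirac_eq_map _ hg,
    Measure.bind_bind (f := fun x => Measure.dirac (g x))
      (Measure.measurable_dirac.comp hg).aemeasurable hf.aemeasurable]
  simp_rw [fun x => Measure.dirac_bind hf (g x)]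

lemma tail_snoc' {k : ℕ} (x : Fin (k+1) → S) (y : S) :
    Fin.tail (Fin.snoc x y : Fin (k+2) → S) = Fin.snoc (Fin.tail x) y := by
  funext i
  induction i using Fin.lastCases with
  | last =>
      have h1 : (Fin.last k).succ = Fin.last (k+1) := by ext; simp
      simp [Fin.tail, h1]
  | cast j =>
      have h1 : (j.castSucc).succ = (j.succ).castSucc := by ext; simp
      simp only [Fin.tail, h1, Fin.snoc_castSucc]

/-- Key step: if the kernel shifts correctly, the tail-pushforward of the
`(K+2)`-dimensional fdd is obtained from that of the `(K+1)`-dimensional one by `κ K`. -/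
lemma step (κ : ∀ m, Kernel (Fin m → S) S) [∀ m, IsMarkovKernel (κ m)] (K : ℕ)
    (hκ : ∀ x : Fin (K+1) → S, κ (K+1) x = κ K (Fin.tail x)) :
    (stratFDD κ (K+2)).map (fun x => Fin.tail x)
      = ((stratFDD κ (K+1)).map (fun x => Fin.tail x)).bind
          (fun z => (κ K z).map (Fin.snoc z)) := by
  conv_lhs => rw [stratFDD]
  rw [map_bind' _ (measurable_snocMap (κ (K+1))) (measurable_tail (K+1)),
    bind_map' _ (measurable_tail K) (measurable_snocMap (κ K))]
  congr 1
  funext x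
  rw [Measure.map_map (measurable_tail (K+1)) (measurable_snoc_left x), hκ x]
  congr 1
  funext y
  exact tail_snoc' x y

/-- **Lemma (extension of a finite-dimensional stationary vector).** Fix `n ≥ 1` and a
strategy `κ` such that, for every `j > n - 1`, the predictive `κ_j(u, x)` depends only
on the last `n - 1` observations `x ∈ S^{n-1}`, through `κ_{n-1}`. If, under `P_κ`,
`(X_2, …, X_n)` has the same distribution as `(X_1, …, X_{n-1})`, then the coordinate
process is stationary under `P_κ`. -/
theorem stationary_extension {S : Type*} [MeasurableSpace S] [StandardBorelSpace S] [Nonempty S]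
    (n : ℕ) (hn : 1 ≤ n)
    (κ : ∀ m, Kernel (Fin m → S) S) [∀ m, IsMarkovKernel (κ m)]
    (hext : ∀ (j : ℕ) (hj : n - 1 < j) (w : Fin j → S),
      κ j w = κ (n - 1) (fun i : Fin (n - 1) =>
        w ⟨j - (n - 1) + (i : ℕ), by have := i.isLt; omega⟩))
    (P : Measure (ℕ → S)) [IsProbabilityMeasure P] (hP : IsStrategyLaw κ P)
    (hshift : P.map (fun ω (i : Fin (n - 1)) => ω ((i : ℕ) + 1))
      = P.map (fun ω (i : Fin (n - 1)) => ω i)) :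
    Stationary P (fun m ω => ω m) := by
  set m := n - 1 with hm
  -- measurability of coordinate maps
  have hmeas_proj : ∀ k : ℕ, Measurable (fun ω : ℕ → S => fun i : Fin k => ω i) :=
    fun k => measurable_pi_lambda _ fun i => measurable_pi_apply _
  have hmeas_shift : ∀ k : ℕ, Measurable (fun ω : ℕ → S => fun i : Fin k => ω ((i : ℕ) + 1)) :=
    fun k => measurable_pi_lambda _ fun i => measurable_pi_apply _
  -- the shifted law of length k is the tail-pushforward of the (k+1)-fdd
  have hshift_tail : ∀ k : ℕ,
      P.map (fun ω => fun i : Fin k => ω ((i : ℕ) + 1))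
        = (stratFDD κ (k+1)).map (fun x => Fin.tail x) := by
    intro k
    rw [← hP (k+1), Measure.map_map (measurable_tail k) (hmeas_proj (k+1))]
    rfl
  -- the kernel shift property, for K ≥ m
  have hκ : ∀ K : ℕ, m ≤ K → ∀ x : Fin (K+1) → S, κ (K+1) x = κ K (Fin.tail x) := by
    intro K hK x
    rw [hext (K+1) (by omega) x]
    rcases Nat.lt_or_ge m K with h | h
    · rw [hext K (by omega) (Fin.tail x)]
      congr 1
      funext i
      show x _ = x (Fin.succ _)
      congr 1
      ext
      simp [Fin.val_succ]
      omega
    · have hKm : K = m := by omega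
      subst hKm
      congr 1
      funext i
      show x _ = x (Fin.succ _)
      congr 1
      ext
      simp [Fin.val_succ]
      omega
  -- main induction: for all d, the shifted law of length m + d is stratFDD κ (m + d)
  have main : ∀ d : ℕ,
      P.map (fun ω => fun i : Fin (m + d) => ω ((i : ℕ) + 1)) = stratFDD κ (m + d) := by
    intro d
    induction d with
    | zero => rw [Nat.add_zero, hshift, hP m]
    | succ d ih =>
        show P.map (fun ω => fun i : Fin (m + d + 1) => ω ((i : ℕ) + 1))
          = stratFDD κ (m + d + 1)
        rw [hshift_tail (m + d + 1)]
        show (stratFDD κ (m + d + 2)).map (fun x => Fin.tail x) = stratFDD κ (m + d + 1)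
        rw [step κ (m+d) (hκ (m+d) (by omega)), ← hshift_tail (m+d), ih]
        conv_rhs => rw [stratFDD]
  -- conclude
  intro k
  rcases le_or_gt m k with h | h
  · obtain ⟨d, rfl⟩ := Nat.exists_eq_add_of_le h
    rw [main d, hP (m + d)]
  · -- k < m : project from the length-m case
    have hcomp : (fun z : Fin m → S => fun i : Fin k => z (Fin.castLE (by omega) i)) ∘
        (fun ω : ℕ → S => fun i : Fin m => ω ((i : ℕ) + 1))
        = fun ω : ℕ → S => fun i : Fin k => ω ((i : ℕ) + 1) := rfl
    have hcomp2 : (fun z : Fin m → S => fun i : Fin k => z (Fin.castLE (by omega) i)) ∘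
        (fun ω : ℕ → S => fun i : Fin m => ω (i : ℕ))
        = fun ω : ℕ → S => fun i : Fin k => ω (i : ℕ) := rfl
    have hmeasc : Measurable (fun z : Fin m → S => fun i : Fin k => z (Fin.castLE (by omega) i)) :=
      measurable_pi_lambda _ fun i => measurable_pi_apply _
    calc P.map (fun ω => fun i : Fin k => ω ((i : ℕ) + 1))
        = (P.map (fun ω => fun i : Fin m => ω ((i : ℕ) + 1))).map
            (fun z => fun i : Fin k => z (Fin.castLE (by omega) i)) := by
          rw [Measure.map_map hmeasc (hmeas_shift m), hcomp]
      _ = (P.map (fun ω => fun i : Fin m => ω (i : ℕ))).map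
            (fun z => fun i : Fin k => z (Fin.castLE (by omega) i)) := by rw [hshift]
      _ = P.map (fun ω => fun i : Fin k => ω (i : ℕ)) := by
          rw [Measure.map_map hmeasc (hmeas_proj m), hcomp2]

end PredictiveBayes
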